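/- There exists a binary octic which is a finite sum of fourth powers of binary quadratic forms but which cannot be written as a sum of two fourth powers of binary quadratic forms; that is, the homogeneous 4-Pythagoras number satisfies p_4(2,8) ≥ 3. -/
import Mathlib

open MvPolynomial


lemma degree_fin2 (d : Fin 2 →₀ ℕ) : d.degree = d 0 + d 1 := by
  rw [Finsupp.degree, ← Fin.sum_univ_two (f := fun i => d i)]
  exact Finset.sum_subset (Finset.subset_univ _) (by
    intro i _ hi
    simpa using Finsupp.notMem_support_iff.mp hi)

lemma fin2_eq_single (d : Fin 2 →₀ ℕ) :
    d = Finsupp.single 0 (d 0) + Finsupp.single 1 (d 1) := by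
  ext i
  fin_cases i <;> simp

lemma homog2 (g : MvPolynomial (Fin 2) ℝ) (h : g.IsHomogeneous 2) :
    ∃ p q r : ℝ, g = C p * X 0 ^ 2 + C q * (X 0 * X 1) + C r * X 1 ^ 2 := by
  refine ⟨g.coeff (Finsupp.single 0 2),
    g.coeff (Finsupp.single 0 1 + Finsupp.single 1 1), g.coeff (Finsupp.single 1 2), ?_⟩
  have hX2 : (X 0 : MvPolynomial (Fin 2) ℝ) ^ 2 = monomial (Finsupp.single 0 2) 1 := by
    rw [X_pow_eq_monomial]
  have hXY : (X 0 : MvPolynomial (Fin 2) ℝ) * X 1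
      = monomial (Finsupp.single 0 1 + Finsupp.single 1 1) 1 := by
    rw [X, X, monomial_mul]; norm_num
  have hY2 : (X 1 : MvPolynomial (Fin 2) ℝ) ^ 2 = monomial (Finsupp.single 1 2) 1 := by
    rw [X_pow_eq_monomial]
  ext d
  rw [hX2, hXY, hY2]
  simp only [coeff_add, coeff_C_mul, coeff_monomial, mul_ite, mul_one, mul_zero]
  by_cases hd : d.degree = 2
  · rw [degree_fin2] at hd
    have hds := fin2_eq_single d
    have : d 0 = 0 ∧ d 1 = 2 ∨ d 0 = 1 ∧ d 1 = 1 ∨ d 0 = 2 ∧ d 1 = 0 := by omega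
    rcases this with ⟨h0, h1⟩ | ⟨h0, h1⟩ | ⟨h0, h1⟩ <;>
      rw [h0, h1] at hds <;> subst hds <;>
      simp [Finsupp.single_eq_single_iff, Finsupp.ext_iff, Fin.forall_fin_two]
  · rw [h.coeff_eq_zero hd]
    rw [degree_fin2] at hd
    have h1 : ¬ Finsupp.single (0 : Fin 2) 2 = d := by
      intro he; rw [← he] at hd; simp at hd
    have h2 : ¬ Finsupp.single (0 : Fin 2) 1 + Finsupp.single 1 1 = d := by
      intro he; rw [← he] at hd; simp at hd
    have h3 : ¬ Finsupp.single (1 : Fin 2) 2 = d := by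
      intro he; rw [← he] at hd; simp at hd
    simp [h1, h2, h3]


/-- There is a binary octic which is a finite sum of fourth powers of binary
quadratic forms but not a sum of two such fourth powers, i.e. `p₄(2,8) ≥ 3`. -/
theorem pythagoras4_binary_octics_ge_three :
    ∃ f : MvPolynomial (Fin 2) ℝ,
      (∃ (m : ℕ) (g : Fin m → MvPolynomial (Fin 2) ℝ),
        (∀ i, (g i).IsHomogeneous 2) ∧ f = ∑ i, g i ^ 4) ∧
      ¬ ∃ g : Fin 2 → MvPolynomial (Fin 2) ℝ,
        (∀ i, (g i).IsHomogeneous 2) ∧ f = ∑ i, g i ^ 4 := by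
  have hX0 : ((X 0 : MvPolynomial (Fin 2) ℝ) ^ 2).IsHomogeneous 2 := by
    simpa using (isHomogeneous_X ℝ (0 : Fin 2)).pow 2
  have hXY : ((X 0 : MvPolynomial (Fin 2) ℝ) * X 1).IsHomogeneous 2 := by
    simpa using (isHomogeneous_X ℝ (0 : Fin 2)).mul (isHomogeneous_X ℝ 1)
  refine ⟨(X 0 ^ 2) ^ 4 + (X 0 * X 1) ^ 4 + (X 0 ^ 2 + X 0 * X 1) ^ 4,
    ⟨3, ![X 0 ^ 2, X 0 * X 1, X 0 ^ 2 + X 0 * X 1], ?_, ?_⟩, ?_⟩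
  · intro i
    fin_cases i
    · simpa using hX0
    · simpa using hXY
    · simpa using hX0.add hXY
  · rw [Fin.sum_univ_three]
    simp
  · rintro ⟨g, hg, hf⟩
    obtain ⟨p1, q1, r1, hg0⟩ := homog2 (g 0) (hg 0)
    obtain ⟨p2, q2, r2, hg1⟩ := homog2 (g 1) (hg 1)
    rw [Fin.sum_univ_two, hg0, hg1] at hf
    have ev : ∀ x y : ℝ, (x^2)^4 + (x*y)^4 + (x^2 + x*y)^4 =
        (p1*x^2 + q1*(x*y) + r1*y^2)^4 + (p2*x^2 + q2*(x*y) + r2*y^2)^4 := by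
      intro x y
      have h := congrArg (eval ![x, y]) hf
      simpa [eval_add, eval_mul, eval_pow] using h
    have e01 := ev 0 1
    norm_num at e01
    -- e01 : 0 = r1^4 + r2^4  (check exact form)
    have hr1 : r1 = 0 := by
      have h1 : (r1^2)^2 = 0 := by nlinarith [sq_nonneg (r1^2), sq_nonneg (r2^2)]
      have := pow_eq_zero_iff (n := 2) (by norm_num) |>.mp h1
      exact pow_eq_zero_iff (n := 2) (by norm_num) |>.mp this
    have hr2 : r2 = 0 := by
      have h1 : (r2^2)^2 = 0 := by nlinarith [sq_nonneg (r1^2), sq_nonneg (r2^2)]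
      have := pow_eq_zero_iff (n := 2) (by norm_num) |>.mp h1
      exact pow_eq_zero_iff (n := 2) (by norm_num) |>.mp this
    subst hr1 hr2
    have H0 := ev 1 0
    have H1 := ev 1 1
    have Hm1 := ev 1 (-1)
    have H2 := ev 1 2
    have Hm2 := ev 1 (-2)
    have e0 : p1^4 + p2^4 = 2 := by linear_combination (-1 : ℝ) * H0
    have e1 : p1^3*q1 + p2^3*q2 = 1 := by
      linear_combination (-1/6 : ℝ)*H1 + (1/6 : ℝ)*Hm1 + (1/48 : ℝ)*H2 - (1/48 : ℝ)*Hm2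
    have e2 : p1^2*q1^2 + p2^2*q2^2 = 1 := by
      linear_combination (5/24 : ℝ)*H0 - (1/9 : ℝ)*H1 - (1/9 : ℝ)*Hm1 + (1/144 : ℝ)*H2 + (1/144 : ℝ)*Hm2
    have e3 : p1*q1^3 + p2*q2^3 = 1 := by
      linear_combination (1/24 : ℝ)*H1 - (1/24 : ℝ)*Hm1 - (1/48 : ℝ)*H2 + (1/48 : ℝ)*Hm2
    have e4 : q1^4 + q2^4 = 2 := by
      linear_combination (-1/4 : ℝ)*H0 + (1/6 : ℝ)*H1 + (1/6 : ℝ)*Hm1 - (1/24 : ℝ)*H2 - (1/24 : ℝ)*Hm2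
    have : (0:ℝ) = 1 := by
      linear_combination
        ((p1^2*q1^2+p2^2*q2^2)*(q1^4+q2^4) - (p1*q1^3+p2*q2^3)^2) * e0
        + (2*(p1^2*q1^2+p2^2*q2^2)*(p1*q1^3+p2*q2^3) - ((p1^3*q1+p2^3*q2)+1)*(q1^4+q2^4)) * e1
        + (2*(q1^4+q2^4) + 2*(p1*q1^3+p2*q2^3) - (p1^2*q1^2+p2^2*q2^2)^2 - (p1^2*q1^2+p2^2*q2^2) - 1) * e2
        + (-2*(p1*q1^3+p2*q2^3)) * e3
        + e4
    norm_num at this
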